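/- Let G ≅ Z_{m_1} × Z_{m_2} × ⋯ × Z_{m_s} be a finite abelian group with m_i dividing m_{i+1} for each i, of order n coprime to the prime power q. Then G has a splitting over Z = {0} given by −q if and only if each cyclic summand Z_{m_i} has a splitting over Z = {0} given by −q. -/
import Mathlib


/-- An (additive) abelian group `H` has a splitting over `Z = {0}` given by `-q` when `H`
is the union of pairwise disjoint sets `{0}`, `X₀`, `X₁` with `(-q)·X₀ = X₁` and
`(-q)·X₁ = X₀`, the multiplication being `x ↦ (-q) • x`. -/
def HasSplittingByNegQ (H : Type) [AddCommGroup H] (q : ℕ) : Prop :=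
  ∃ X₀ X₁ : Set H,
    ({0} : Set H) ∪ X₀ ∪ X₁ = Set.univ ∧
    (0 : H) ∉ X₀ ∧ (0 : H) ∉ X₁ ∧ Disjoint X₀ X₁ ∧
    (fun x : H => (-(q : ℤ)) • x) '' X₀ = X₁ ∧
    (fun x : H => (-(q : ℤ)) • x) '' X₁ = X₀

lemma unit_zsmul_bijective {R : Type*} [CommRing R] (k : ℤ) (h : IsUnit ((k : R))) :
    Function.Bijective (fun x : R => k • x) := by
  obtain ⟨u, hu⟩ := h
  constructor
  · intro a b hab
    simp only [zsmul_eq_mul] at hab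
    have h' : IsUnit ((k : R)) := ⟨u, hu⟩
    exact h'.mul_left_cancel hab
  · intro y
    refine ⟨(↑u⁻¹ : R) * y, ?_⟩
    simp only [zsmul_eq_mul, ← hu, ← mul_assoc]
    simp

/-- Let `G ≅ Z_{m₁} × ⋯ × Z_{m_s}` be a finite abelian group in
invariant-factor form (`m i ∣ m j` for `i ≤ j`), of order `n = ∏ m i` coprime to the prime
power `q`.  Then `G` has a splitting over `Z = {0}` given by `-q` if and only if each
cyclic summand `Z_{m i}` has a splitting over `Z = {0}` given by `-q`. -/
theorem stmt8
    (s : ℕ) (m : Fin s → ℕ) (hm : ∀ i, 0 < m i)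
    (hdvd : ∀ i j : Fin s, i ≤ j → m i ∣ m j)
    (q : ℕ) (hq : IsPrimePow q)
    (hn : Nat.Coprime (∏ i, m i) q) :
    HasSplittingByNegQ (∀ i, ZMod (m i)) q ↔ ∀ i, HasSplittingByNegQ (ZMod (m i)) q := by
  classical
  haveI : ∀ i, NeZero (m i) := fun i => ⟨(hm i).ne'⟩
  have hco : ∀ i, Nat.Coprime q (m i) := fun i =>
    (Nat.Coprime.coprime_dvd_left (Finset.dvd_prod_of_mem m (Finset.mem_univ i)) hn).symm
  have hu : ∀ i, IsUnit (((-(q : ℤ)) : ℤ) : ZMod (m i)) := by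
    intro i
    have h1 : (((-(q : ℤ)) : ℤ) : ZMod (m i)) = -((q : ℕ) : ZMod (m i)) := by push_cast; ring
    rw [h1]
    exact ((ZMod.isUnit_iff_coprime q (m i)).mpr (hco i)).neg
  have hbij : ∀ i, Function.Bijective (fun x : ZMod (m i) => (-(q : ℤ)) • x) :=
    fun i => unit_zsmul_bijective _ (hu i)
  have hbijG : Function.Bijective (fun x : ∀ i, ZMod (m i) => (-(q : ℤ)) • x) := by
    constructor
    · intro a b hab
      funext i
      exact (hbij i).1 (congrFun hab i)
    · intro y
      choose x hx using fun i => (hbij i).2 (y i)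
      exact ⟨x, funext hx⟩
  have hzero : ∀ i (z : ZMod (m i)), (-(q : ℤ)) • z = 0 ↔ z = 0 := by
    intro i z
    constructor
    · intro h
      have := (hbij i).1 (a₁ := z) (a₂ := 0) (by simpa using h)
      exact this
    · rintro rfl; simp
  constructor
  · -- product splits → each factor splits
    rintro ⟨X₀, X₁, hunion, h0₀, h0₁, hdisj, h01, h10⟩ i
    set ι : ZMod (m i) → ∀ j, ZMod (m j) := fun x => Pi.single i x with hι
    have hιinj : Function.Injective ι := fun a b hab => by
      have := congrFun hab i
      simpa [hι] using this
    have hιcomm : ∀ x : ZMod (m i), ι ((-(q : ℤ)) • x) = (-(q : ℤ)) • ι x := by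
      intro x
      ext j
      by_cases hj : j = i
      · subst hj; simp [hι]
      · simp [hι, Pi.single_eq_of_ne hj]
    refine ⟨ι ⁻¹' X₀, ι ⁻¹' X₁, ?_, ?_, ?_, ?_, ?_, ?_⟩
    · ext x
      simp only [Set.mem_union, Set.mem_singleton_iff, Set.mem_preimage, Set.mem_univ,
        iff_true]
      have : ι x ∈ ({0} : Set (∀ j, ZMod (m j))) ∪ X₀ ∪ X₁ := by
        rw [hunion]; trivial
      rcases this with (h | h) | h
      · left; left
        apply hιinj
        simpa [hι] using h
      · left; right; exact h
      · right; exact h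
    · intro h; apply h0₀; simpa [hι] using h
    · intro h; apply h0₁; simpa [hι] using h
    · rw [Set.disjoint_left] at hdisj ⊢
      intro x hx₀ hx₁
      exact hdisj hx₀ hx₁
    · ext y
      constructor
      · rintro ⟨x, hx, rfl⟩
        simp only [Set.mem_preimage] at hx ⊢
        rw [hιcomm]
        rw [← h01]
        exact ⟨ι x, hx, rfl⟩
      · intro hy
        simp only [Set.mem_preimage] at hy
        rw [← h01] at hy
        obtain ⟨z, hz, hzy⟩ := hy
        obtain ⟨x, rfl⟩ := (hbij i).2 y
        refine ⟨x, ?_, rfl⟩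
        simp only [Set.mem_preimage]
        change (-(q : ℤ)) • z = ι ((-(q : ℤ)) • x) at hzy
        rw [hιcomm] at hzy
        have hzx : z = ι x := hbijG.1 hzy
        rwa [hzx] at hz
    · ext y
      constructor
      · rintro ⟨x, hx, rfl⟩
        simp only [Set.mem_preimage] at hx ⊢
        rw [hιcomm]
        rw [← h10]
        exact ⟨ι x, hx, rfl⟩
      · intro hy
        simp only [Set.mem_preimage] at hy
        rw [← h10] at hy
        obtain ⟨z, hz, hzy⟩ := hy
        obtain ⟨x, rfl⟩ := (hbij i).2 y
        refine ⟨x, ?_, rfl⟩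
        simp only [Set.mem_preimage]
        change (-(q : ℤ)) • z = ι ((-(q : ℤ)) • x) at hzy
        rw [hιcomm] at hzy
        have hzx : z = ι x := hbijG.1 hzy
        rwa [hzx] at hz
  · -- each factor splits → product splits
    intro h
    choose X₀ X₁ hunion h0₀ h0₁ hdisj h01 h10 using h
    have flip01 : ∀ i (z : ZMod (m i)), z ∈ X₀ i ↔ (-(q : ℤ)) • z ∈ X₁ i := by
      intro i z
      constructor
      · intro hz; rw [← h01]; exact ⟨z, hz, rfl⟩
      · intro hz
        rw [← h01] at hz
        obtain ⟨w, hw, hwz⟩ := hz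
        have := (hbij i).1 hwz
        rwa [← this]
    have flip10 : ∀ i (z : ZMod (m i)), z ∈ X₁ i ↔ (-(q : ℤ)) • z ∈ X₀ i := by
      intro i z
      constructor
      · intro hz; rw [← h10]; exact ⟨z, hz, rfl⟩
      · intro hz
        rw [← h10] at hz
        obtain ⟨w, hw, hwz⟩ := hz
        have := (hbij i).1 hwz
        rwa [← this]
    set supp : (∀ i, ZMod (m i)) → Finset (Fin s) :=
      fun x => Finset.univ.filter fun i => x i ≠ 0 with hsuppdef
    have hsupp : ∀ x : ∀ i, ZMod (m i), supp ((-(q : ℤ)) • x) = supp x := by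
      intro x
      ext i
      simp only [hsuppdef, Finset.mem_filter, Finset.mem_univ, true_and, Pi.smul_apply]
      rw [not_iff_not]
      exact hzero i (x i)
    have hmem_supp : ∀ (x : ∀ i, ZMod (m i)) (i : Fin s), i ∈ supp x ↔ x i ≠ 0 := by
      intro x i; simp [hsuppdef]
    set Y₀ : Set (∀ i, ZMod (m i)) :=
      {x | ∃ i : Fin s, (supp x).min = (i : WithTop (Fin s)) ∧ x i ∈ X₀ i} with hY₀
    set Y₁ : Set (∀ i, ZMod (m i)) :=
      {x | ∃ i : Fin s, (supp x).min = (i : WithTop (Fin s)) ∧ x i ∈ X₁ i} with hY₁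
    have hsupp0 : supp 0 = ∅ := by
      ext i; simp [hsuppdef]
    refine ⟨Y₀, Y₁, ?_, ?_, ?_, ?_, ?_, ?_⟩
    · ext x
      simp only [Set.mem_union, Set.mem_singleton_iff, Set.mem_univ, iff_true]
      by_cases hx : x = 0
      · left; left; exact hx
      · have hne : (supp x).Nonempty := by
          rcases Function.ne_iff.mp hx with ⟨i, hi⟩
          exact ⟨i, (hmem_supp x i).mpr (by simpa using hi)⟩
        obtain ⟨i, hi⟩ := Finset.min_of_nonempty hne
        have hxi : x i ≠ 0 := (hmem_supp x i).mp (Finset.mem_of_min hi)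
        have : x i ∈ ({0} : Set (ZMod (m i))) ∪ X₀ i ∪ X₁ i := by
          rw [hunion i]; trivial
        rcases this with (h | h) | h
        · exact absurd h hxi
        · left; right; exact ⟨i, hi, h⟩
        · right; exact ⟨i, hi, h⟩
    · rintro ⟨i, hi, -⟩
      rw [hsupp0] at hi
      simp at hi
    · rintro ⟨i, hi, -⟩
      rw [hsupp0] at hi
      simp at hi
    · rw [Set.disjoint_left]
      rintro x ⟨i, hi, hxi⟩ ⟨j, hj, hxj⟩
      have hij : i = j := by
        rw [hi] at hj
        exact_mod_cast hj
      subst hij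
      exact Set.disjoint_left.mp (hdisj i) hxi hxj
    · ext y
      constructor
      · rintro ⟨x, ⟨i, hi, hxi⟩, rfl⟩
        refine ⟨i, ?_, ?_⟩
        · rw [hsupp]; exact hi
        · exact (flip01 i (x i)).mp hxi
      · rintro ⟨i, hi, hyi⟩
        obtain ⟨x, rfl⟩ := hbijG.2 y
        refine ⟨x, ⟨i, ?_, ?_⟩, rfl⟩
        · rw [hsupp] at hi; exact hi
        · exact (flip01 i (x i)).mpr hyi
    · ext y
      constructor
      · rintro ⟨x, ⟨i, hi, hxi⟩, rfl⟩
        refine ⟨i, ?_, ?_⟩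
        · rw [hsupp]; exact hi
        · exact (flip10 i (x i)).mp hxi
      · rintro ⟨i, hi, hyi⟩
        obtain ⟨x, rfl⟩ := hbijG.2 y
        refine ⟨x, ⟨i, ?_, ?_⟩, rfl⟩
        · rw [hsupp] at hi; exact hi
        · exact (flip10 i (x i)).mpr hyi
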